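/- arXiv:1912.12641 — 2 statements merged into one kernel-verified Lean document; each statement's English description precedes it below -/
import Mathlib

section
/- Let $n \ge 2$ be a natural number and $K \le k$ real numbers. Let $R, R' > 0$ satisfy: $R \le \pi/\sqrt{k}$ if $k > 0$, and $R' \le \pi/\sqrt{K}$ if $K > 0$. If $\int_0^{R'} \sin_K(t)^{n-1}\, dt = \int_0^{R} \sin_k(t)^{n-1}\, dt$, then $R' \le R$. -/
open Real MeasureTheory Set Filter

/-- The generalized sine function `sin_m`. -/
noncomputable def sinm (m r : ℝ) : ℝ :=
  if 0 < m then Real.sin (Real.sqrt m * r) / Real.sqrt m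
  else if m = 0 then r
  else Real.sinh (Real.sqrt (-m) * r) / Real.sqrt (-m)

/-- The derivative `sin_m'` of the generalized sine function. -/
noncomputable def sinm' (m r : ℝ) : ℝ :=
  if 0 < m then Real.cos (Real.sqrt m * r)
  else if m = 0 then 1
  else Real.cosh (Real.sqrt (-m) * r)

lemma convexOn_sinh_Ici : ConvexOn ℝ (Set.Ici (0:ℝ)) Real.sinh := by
  apply convexOn_of_deriv2_nonneg' (convex_Ici 0)
  · exact Real.differentiable_sinh.differentiableOn
  · rw [Real.deriv_sinh]
    exact Real.differentiable_cosh.differentiableOn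
  · intro x hx
    simp only [Function.iterate_succ, Function.iterate_zero, Function.comp_apply, id_eq,
      Real.deriv_sinh, Real.deriv_cosh]
    exact Real.sinh_nonneg_iff.2 hx

/-- `a * sin b ≤ b * sin a` for `0 ≤ a ≤ b ≤ π`. -/
lemma mul_sin_le (a b : ℝ) (ha : 0 ≤ a) (hab : a ≤ b) (hb : b ≤ Real.pi) :
    a * Real.sin b ≤ b * Real.sin a := by
  rcases eq_or_lt_of_le (ha.trans hab) with h | hb0
  · have : a = 0 := le_antisymm (hab.trans h.symm.le) ha
    simp [this, ← h]
  · have hconc := strictConcaveOn_sin_Icc.concaveOn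
    have key := hconc.2 (x := b) (y := 0) ⟨ha.trans hab, hb⟩ ⟨le_rfl, Real.pi_pos.le⟩
      (show (0:ℝ) ≤ a / b from div_nonneg ha hb0.le)
      (show (0:ℝ) ≤ 1 - a / b by rw [sub_nonneg]; exact div_le_one_of_le₀ hab hb0.le) (by ring)
    simp only [smul_eq_mul, mul_zero, add_zero, Real.sin_zero] at key
    have : a / b * b = a := div_mul_cancel₀ a hb0.ne'
    rw [this] at key
    calc a * Real.sin b = b * (a / b * Real.sin b) := by field_simp
    _ ≤ b * Real.sin a := by
        apply mul_le_mul_of_nonneg_left _ hb0.le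
        calc a / b * Real.sin b ≤ a / b * Real.sin b + (1 - a / b) * 0 := by simp
        _ ≤ Real.sin a := by simpa using key

/-- `b * sinh a ≤ a * sinh b` for `0 ≤ a ≤ b`. -/
lemma mul_sinh_le (a b : ℝ) (ha : 0 ≤ a) (hab : a ≤ b) :
    b * Real.sinh a ≤ a * Real.sinh b := by
  rcases eq_or_lt_of_le (ha.trans hab) with h | hb0
  · have : a = 0 := le_antisymm (hab.trans h.symm.le) ha
    simp [this, ← h]
  · have key := convexOn_sinh_Ici.2 (x := b) (y := 0) (Set.mem_Ici.2 (ha.trans hab))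
      (Set.mem_Ici.2 le_rfl)
      (show (0:ℝ) ≤ a / b from div_nonneg ha hb0.le)
      (show (0:ℝ) ≤ 1 - a / b by rw [sub_nonneg]; exact div_le_one_of_le₀ hab hb0.le) (by ring)
    simp only [smul_eq_mul, mul_zero, add_zero, Real.sinh_zero] at key
    have : a / b * b = a := div_mul_cancel₀ a hb0.ne'
    rw [this] at key
    calc b * Real.sinh a ≤ b * (a / b * Real.sinh b) := by
          apply mul_le_mul_of_nonneg_left _ hb0.le; simpa using key
    _ = a * Real.sinh b := by field_simp

lemma continuous_sinm (m : ℝ) : Continuous (sinm m) := by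
  unfold sinm
  split_ifs
  · exact (Real.continuous_sin.comp (continuous_const.mul continuous_id)).div_const _
  · exact continuous_id
  · exact (Real.continuous_sinh.comp (continuous_const.mul continuous_id)).div_const _

lemma sinm_nonneg (m t : ℝ) (ht : 0 ≤ t) (h : 0 < m → Real.sqrt m * t ≤ Real.pi) :
    0 ≤ sinm m t := by
  unfold sinm
  split_ifs with h1 h2
  · exact div_nonneg (Real.sin_nonneg_of_nonneg_of_le_pi
      (mul_nonneg (Real.sqrt_nonneg m) ht) (h h1)) (Real.sqrt_nonneg m)
  · exact ht
  · exact div_nonneg (Real.sinh_nonneg_iff.2 (mul_nonneg (Real.sqrt_nonneg _) ht)) (Real.sqrt_nonneg _)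

lemma sinm_pos (m t : ℝ) (ht : 0 < t) (h : 0 < m → Real.sqrt m * t < Real.pi) :
    0 < sinm m t := by
  unfold sinm
  split_ifs with h1 h2
  · exact div_pos (Real.sin_pos_of_pos_of_lt_pi
      (mul_pos (Real.sqrt_pos.2 h1) ht) (h h1)) (Real.sqrt_pos.2 h1)
  · exact ht
  · have hm : 0 < -m := by
      push_neg at h1
      rcases lt_or_eq_of_le h1 with h' | h'
      · linarith
      · exact absurd h' h2
    exact div_pos (by rw [Real.sinh_pos_iff]; exact mul_pos (Real.sqrt_pos.2 hm) ht)
      (Real.sqrt_pos.2 hm)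

/-- Monotonicity of `sinm` in the curvature parameter. -/
lemma sinm_le_sinm (K k t : ℝ) (hKk : K ≤ k) (ht : 0 ≤ t)
    (hk : 0 < k → Real.sqrt k * t ≤ Real.pi) : sinm k t ≤ sinm K t := by
  rcases eq_or_lt_of_le hKk with rfl | hlt
  · exact le_refl _
  rcases eq_or_lt_of_le ht with rfl | ht0
  · unfold sinm; split_ifs <;> simp
  unfold sinm
  by_cases hK : 0 < K
  · have hkpos : 0 < K := hK
    have hkp : 0 < k := hK.trans hlt
    rw [if_pos hK, if_pos hkp]
    have hsk : 0 < Real.sqrt k := Real.sqrt_pos.2 hkp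
    have hsK : 0 < Real.sqrt K := Real.sqrt_pos.2 hK
    rw [div_le_div_iff₀ hsk hsK]
    have hab : Real.sqrt K * t ≤ Real.sqrt k * t :=
      mul_le_mul_of_nonneg_right (Real.sqrt_le_sqrt hKk) ht
    have key := mul_sin_le (Real.sqrt K * t) (Real.sqrt k * t)
      (mul_nonneg hsK.le ht) hab (hk hkp)
    nlinarith [key, ht0]
  · rw [if_neg hK]
    have step2 : t ≤ (if K = 0 then t
        else Real.sinh (Real.sqrt (-K) * t) / Real.sqrt (-K)) := by
      split_ifs with h0
      · exact le_refl t
      · have hKneg : K < 0 := lt_of_le_of_ne (not_lt.1 hK) h0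
        have hs : 0 < Real.sqrt (-K) := Real.sqrt_pos.2 (by linarith)
        rw [le_div_iff₀ hs]
        calc t * Real.sqrt (-K) = Real.sqrt (-K) * t := mul_comm _ _
        _ ≤ Real.sinh (Real.sqrt (-K) * t) :=
            (Real.self_lt_sinh_iff.2 (mul_pos hs ht0)).le
    by_cases hkp : 0 < k
    · rw [if_pos hkp]
      refine le_trans ?_ step2
      have hsk : 0 < Real.sqrt k := Real.sqrt_pos.2 hkp
      rw [div_le_iff₀ hsk]
      calc Real.sin (Real.sqrt k * t) ≤ Real.sqrt k * t :=
            Real.sin_le (mul_nonneg hsk.le ht)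
      _ = t * Real.sqrt k := mul_comm _ _
    · rw [if_neg hkp]
      by_cases hk0 : k = 0
      · rw [if_pos hk0]; exact step2
      · have hkneg : k < 0 := lt_of_le_of_ne (not_lt.1 hkp) hk0
        have hKneg : K < 0 := hlt.trans hkneg
        rw [if_neg hk0, if_neg (ne_of_lt hKneg)]
        have hsk : 0 < Real.sqrt (-k) := Real.sqrt_pos.2 (by linarith)
        have hsK : 0 < Real.sqrt (-K) := Real.sqrt_pos.2 (by linarith)
        rw [div_le_div_iff₀ hsk hsK]
        have hab : Real.sqrt (-k) * t ≤ Real.sqrt (-K) * t :=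
          mul_le_mul_of_nonneg_right (Real.sqrt_le_sqrt (by linarith)) ht
        have key := mul_sinh_le (Real.sqrt (-k) * t) (Real.sqrt (-K) * t)
          (mul_nonneg hsk.le ht) hab
        nlinarith [key, ht0]

/-- If the balls `B_K(R')` and `B_k(R)` in the `n`-dimensional space forms of
curvatures `K ≤ k` have the same volume, then `R' ≤ R`. -/
theorem radius_le_of_volume_eq (n : ℕ) (hn : 2 ≤ n) (K k : ℝ) (hKk : K ≤ k)
    (R R' : ℝ) (hR : 0 < R) (hR' : 0 < R')
    (hRk : 0 < k → R ≤ Real.pi / Real.sqrt k)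
    (hR'K : 0 < K → R' ≤ Real.pi / Real.sqrt K)
    (hvol : ∫ t in (0:ℝ)..R', sinm K t ^ (n - 1) = ∫ t in (0:ℝ)..R, sinm k t ^ (n - 1)) :
    R' ≤ R := by
  by_contra hcon
  push_neg at hcon
  have hint : ∀ (m a b : ℝ), IntervalIntegrable (fun t => sinm m t ^ (n - 1)) volume a b :=
    fun m a b => (((continuous_sinm m).pow _).intervalIntegrable a b)
  have hbound : ∀ x ∈ Icc (0:ℝ) R, 0 < k → Real.sqrt k * x ≤ Real.pi := by
    intro x hx hkp
    have hsk : 0 < Real.sqrt k := Real.sqrt_pos.2 hkp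
    calc Real.sqrt k * x ≤ Real.sqrt k * R := mul_le_mul_of_nonneg_left hx.2 hsk.le
    _ ≤ Real.pi := by
        have := hRk hkp
        rw [le_div_iff₀ hsk] at this
        linarith [this]
  have mono : (∫ t in (0:ℝ)..R, sinm k t ^ (n - 1)) ≤ ∫ t in (0:ℝ)..R, sinm K t ^ (n - 1) := by
    apply intervalIntegral.integral_mono_on hR.le (hint k 0 R) (hint K 0 R)
    intro x hx
    have hx' : x ∈ Icc (0:ℝ) R := by simpa using hx
    exact pow_le_pow_left₀ (sinm_nonneg k x hx'.1 (hbound x hx'))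
      (sinm_le_sinm K k x hKk hx'.1 (hbound x hx')) _
  have pos : 0 < ∫ t in R..R', sinm K t ^ (n - 1) := by
    apply intervalIntegral.intervalIntegral_pos_of_pos_on (hint K R R') _ hcon
    intro x hx
    refine pow_pos (sinm_pos K x (hR.trans hx.1) fun hKp => ?_) _
    have hsK : 0 < Real.sqrt K := Real.sqrt_pos.2 hKp
    have h1 : Real.sqrt K * x < Real.sqrt K * R' := by
      exact mul_lt_mul_of_pos_left hx.2 hsK
    have h2 : Real.sqrt K * R' ≤ Real.pi := by
      have := hR'K hKp
      rw [le_div_iff₀ hsK] at this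
      linarith [this]
    linarith
  have split : (∫ t in (0:ℝ)..R, sinm K t ^ (n - 1)) + (∫ t in R..R', sinm K t ^ (n - 1))
      = ∫ t in (0:ℝ)..R', sinm K t ^ (n - 1) :=
    intervalIntegral.integral_add_adjacent_intervals (hint K 0 R) (hint K R R')
  linarith
end

section
/- Let $n \ge 2$ be a natural number, $k \le 0$ and $\mu > 0$ real numbers, and $R > 0$. Suppose $F : \mathbb{R} \to \mathbb{R}$ is twice differentiable on $(0,R)$ and satisfies on $(0,R)$ the ordinary differential equation $F''(r) + (n-1)\dfrac{\sin_k'(r)}{\sin_k(r)} F'(r) - \dfrac{n-1}{\sin_k(r)^2} F(r) + \mu F(r) = 0$, together with $F(r) \ge 0$ and $F'(r) \ge 0$ for all $r \in (0,R)$. Then the function $G(r) = F'(r)^2 + \dfrac{n-1}{\sin_k(r)^2} F(r)^2$ is monotone nonincreasing on $(0,R)$. -/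
open Real MeasureTheory Set Filter

lemma sinm_pos_s11 {k : ℝ} (hk : k ≤ 0) {r : ℝ} (hr : 0 < r) : 0 < sinm k r := by
  rcases eq_or_lt_of_le hk with h | h
  · simp [sinm, h, not_lt.mpr hk, hr]
  · have hm : ¬ (0 < k) := not_lt.mpr hk
    have hne : k ≠ 0 := ne_of_lt h
    have ha : 0 < Real.sqrt (-k) := Real.sqrt_pos.mpr (by linarith)
    have : 0 < Real.sinh (Real.sqrt (-k) * r) := by
      rw [Real.sinh_pos_iff]; positivity
    simp only [sinm, if_neg hm, if_neg hne]
    positivity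

lemma sinm'_ge_one {k : ℝ} (hk : k ≤ 0) (r : ℝ) : 1 ≤ sinm' k r := by
  rcases eq_or_lt_of_le hk with h | h
  · simp [sinm', h, not_lt.mpr hk]
  · have hm : ¬ (0 < k) := not_lt.mpr hk
    have hne : k ≠ 0 := ne_of_lt h
    simp only [sinm', if_neg hm, if_neg hne]
    exact Real.one_le_cosh _

lemma hasDerivAt_sinm {k : ℝ} (hk : k ≤ 0) (r : ℝ) :
    HasDerivAt (sinm k) (sinm' k r) r := by
  rcases eq_or_lt_of_le hk with h | h
  · have : sinm k = fun r => r := by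
      funext x; simp [sinm, h, not_lt.mpr hk]
    rw [this]
    simpa [sinm', h, not_lt.mpr hk] using hasDerivAt_id' r
  · have hm : ¬ (0 < k) := not_lt.mpr hk
    have hne : k ≠ 0 := ne_of_lt h
    have ha : 0 < Real.sqrt (-k) := Real.sqrt_pos.mpr (by linarith)
    have h1 : HasDerivAt (fun x : ℝ => Real.sqrt (-k) * x) (Real.sqrt (-k)) r := by
      simpa using (hasDerivAt_id r).const_mul (Real.sqrt (-k))
    have h2 : HasDerivAt (fun x : ℝ => Real.sinh (Real.sqrt (-k) * x) / Real.sqrt (-k))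
        (Real.cosh (Real.sqrt (-k) * r) * Real.sqrt (-k) / Real.sqrt (-k)) r :=
      (((Real.hasDerivAt_sinh _).comp r h1)).div_const _
    have : sinm k = fun x : ℝ => Real.sinh (Real.sqrt (-k) * x) / Real.sqrt (-k) := by
      funext x; simp [sinm, hm, hne]
    rw [this]
    have heq : Real.cosh (Real.sqrt (-k) * r) * Real.sqrt (-k) / Real.sqrt (-k)
        = sinm' k r := by
      field_simp [sinm', hm, hne]
      simp [sinm', hm, hne]
    rwa [heq] at h2

/-- If `F` solves the radial Neumann eigenvalue equation on `(0,R)` for `k ≤ 0`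
with `F ≥ 0` and `F' ≥ 0`, then `G(r) = F'(r)² + (n-1)/sin_k(r)² F(r)²` is
monotone nonincreasing on `(0,R)`. -/
theorem energy_antitone (n : ℕ) (hn : 2 ≤ n) (k : ℝ) (hk : k ≤ 0)
    (μ : ℝ) (hμ : 0 < μ) (R : ℝ) (hR : 0 < R) (F F' F'' : ℝ → ℝ)
    (hF' : ∀ r ∈ Set.Ioo (0:ℝ) R, HasDerivAt F (F' r) r)
    (hF'' : ∀ r ∈ Set.Ioo (0:ℝ) R, HasDerivAt F' (F'' r) r)
    (hode : ∀ r ∈ Set.Ioo (0:ℝ) R,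
      F'' r + ((n : ℝ) - 1) * (sinm' k r / sinm k r) * F' r
        - ((n : ℝ) - 1) / (sinm k r) ^ 2 * F r + μ * F r = 0)
    (hFnonneg : ∀ r ∈ Set.Ioo (0:ℝ) R, 0 ≤ F r)
    (hF'nonneg : ∀ r ∈ Set.Ioo (0:ℝ) R, 0 ≤ F' r) :
    AntitoneOn (fun r => (F' r) ^ 2 + ((n : ℝ) - 1) / (sinm k r) ^ 2 * (F r) ^ 2)
      (Set.Ioo 0 R) := by
  set c : ℝ := (n : ℝ) - 1 with hc
  have hcpos : 0 < c := by
    have : (2 : ℝ) ≤ (n : ℝ) := by exact_mod_cast hn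
    simp only [hc]; linarith
  set G : ℝ → ℝ := fun r => (F' r) ^ 2 + c / (sinm k r) ^ 2 * (F r) ^ 2 with hG
  -- derivative of G
  have hGderiv : ∀ r ∈ Set.Ioo (0:ℝ) R,
      HasDerivAt G
        (2 * F' r * F'' r
          + ((0 * (sinm k r) ^ 2 - c * (2 * sinm k r ^ 1 * sinm' k r)) / ((sinm k r) ^ 2) ^ 2
              * (F r) ^ 2
            + c / (sinm k r) ^ 2 * (2 * F r ^ 1 * F' r))) r := by
    intro r hr
    have hs : 0 < sinm k r := sinm_pos_s11 hk hr.1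
    have hd1 : HasDerivAt (fun x => (F' x) ^ 2) (2 * F' r ^ 1 * F'' r) r := by
      simpa using (hF'' r hr).fun_pow 2
    have hd2 : HasDerivAt (fun x => c / (sinm k x) ^ 2 * (F x) ^ 2)
        ((0 * (sinm k r) ^ 2 - c * (2 * sinm k r ^ 1 * sinm' k r)) / ((sinm k r) ^ 2) ^ 2
            * (F r) ^ 2
          + c / (sinm k r) ^ 2 * (2 * F r ^ 1 * F' r)) r := by
      exact ((hasDerivAt_const r c).fun_div ((hasDerivAt_sinm hk r).fun_pow 2)
        (pow_ne_zero 2 hs.ne')).fun_mul ((hF' r hr).fun_pow 2)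
    simpa [pow_one] using hd1.fun_add hd2
  have hdiff : DifferentiableOn ℝ G (Set.Ioo 0 R) := fun r hr =>
    ((hGderiv r hr).differentiableAt).differentiableWithinAt
  apply antitoneOn_of_deriv_nonpos (convex_Ioo 0 R) hdiff.continuousOn
  · rwa [interior_Ioo]
  · intro r hr
    rw [interior_Ioo] at hr
    rw [(hGderiv r hr).deriv]
    have hs : 0 < sinm k r := sinm_pos_s11 hk hr.1
    have hs' : 1 ≤ sinm' k r := sinm'_ge_one hk r
    have hFn := hFnonneg r hr
    have hF'n := hF'nonneg r hr
    have hF''eq : F'' r = c / (sinm k r) ^ 2 * F r - c * (sinm' k r / sinm k r) * F' r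
        - μ * F r := by
      have := hode r hr; linarith
    set s := sinm k r
    set s' := sinm' k r
    rw [hF''eq]
    have hDeq : 2 * F' r * (c / s ^ 2 * F r - c * (s' / s) * F' r - μ * F r)
          + ((0 * s ^ 2 - c * (2 * s ^ 1 * s')) / (s ^ 2) ^ 2 * F r ^ 2
            + c / s ^ 2 * (2 * F r ^ 1 * F' r))
        = (4 * c * F r * F' r * s - 2 * c * s' * F' r ^ 2 * s ^ 2
            - 2 * μ * F r * F' r * s ^ 3 - 2 * c * s' * F r ^ 2) / s ^ 3 := by
      field_simp
      ring
    rw [hDeq]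
    apply div_nonpos_of_nonpos_of_nonneg _ (by positivity)
    have h1 : 0 ≤ c * (s' - 1) * (s ^ 2 * F' r ^ 2 + F r ^ 2) := by
      apply mul_nonneg (mul_nonneg hcpos.le (by linarith)); positivity
    have h2 : 0 ≤ c * (s * F' r - F r) ^ 2 := mul_nonneg hcpos.le (sq_nonneg _)
    have h3 : 0 ≤ μ * F r * F' r * s ^ 3 := by positivity
    nlinarith [h1, h2, h3]
end
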